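/- Let σ ∈ (0,1) and K > 1. There exists c' ∈ (0,1), depending only on K and σ, such that for all ξ, η ∈ ℝ^d satisfying (1/K)·|ξ − η| ≤ |η| ≤ K·|ξ − η|, one has ⟨ξ⟩^σ ≤ ⟨η⟩^σ + c' · ⟨ξ − η⟩^σ. -/

import Mathlib

open MeasureTheory Real
open scoped FourierTransform ENNReal

noncomputable section

/-- `ℝ^d` as a Euclidean space. -/
abbrev E (d : ℕ) := EuclideanSpace ℝ (Fin d)

/-- The Japanese bracket `⟨ξ⟩ = (1 + |ξ|²)^{1/2}`. -/
def jap {d : ℕ} (ξ : E d) : ℝ := Real.sqrt (1 + ‖ξ‖ ^ 2)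

lemma jap_one_le {d : ℕ} (ξ : E d) : 1 ≤ jap ξ := by
  have := Real.sqrt_le_sqrt (show (1:ℝ) ≤ 1 + ‖ξ‖ ^ 2 by nlinarith [sq_nonneg ‖ξ‖])
  rw [jap]
  simpa using this

lemma aux_hasDeriv (σ : ℝ) {x : ℝ} (hx : 0 < x) :
    HasDerivAt (fun x : ℝ => (x + 1) ^ σ - x ^ σ)
      (σ * (x + 1) ^ (σ - 1) - σ * x ^ (σ - 1)) x := by
  have h1 : HasDerivAt (fun x : ℝ => (x + 1) ^ σ) (σ * (x + 1) ^ (σ - 1) * 1) x :=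
    by have h := (Real.hasDerivAt_rpow_const (p := σ) (x := x + 1)
      (Or.inl (by positivity))).comp x ((hasDerivAt_id' x).add_const 1); exact h
  have h2 : HasDerivAt (fun x : ℝ => x ^ σ) (σ * x ^ (σ - 1)) x :=
    Real.hasDerivAt_rpow_const (Or.inl hx.ne')
  have h := h1.sub h2; rw [mul_one] at h; exact h

lemma aux_anti (σ : ℝ) (hσ0 : 0 < σ) (hσ1 : σ < 1) :
    AntitoneOn (fun x : ℝ => (x + 1) ^ σ - x ^ σ) (Set.Ioi 0) := by
  apply antitoneOn_of_deriv_nonpos (convex_Ioi 0)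
  · exact fun x hx => (aux_hasDeriv σ hx).continuousAt.continuousWithinAt
  · rw [interior_Ioi]
    exact fun x hx => (aux_hasDeriv σ hx).differentiableAt.differentiableWithinAt
  · rw [interior_Ioi]
    intro x hx
    rw [(aux_hasDeriv σ hx).deriv]
    have h : (x + 1) ^ (σ - 1) ≤ x ^ (σ - 1) :=
      Real.rpow_le_rpow_of_nonpos hx (by linarith) (by linarith)
    nlinarith

lemma aux_strict_sub (σ : ℝ) (hσ0 : 0 < σ) (hσ1 : σ < 1) {a b : ℝ}
    (ha : 0 < a) (hb : 0 < b) : (a + b) ^ σ < a ^ σ + b ^ σ := by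
  have hab : 0 < a + b := by linarith
  have key : ∀ x : ℝ, 0 < x → x < a + b → x * (a + b) ^ (σ - 1) < x ^ σ := by
    intro x hx hxab
    have h1 : (a + b) ^ (σ - 1) < x ^ (σ - 1) :=
      Real.rpow_lt_rpow_of_neg hx hxab (by linarith)
    calc x * (a + b) ^ (σ - 1) < x * x ^ (σ - 1) := by
          exact mul_lt_mul_of_pos_left h1 hx
      _ = x ^ σ := by
          rw [show σ = 1 + (σ - 1) by ring, Real.rpow_add hx, Real.rpow_one]; ring
  have he : (a + b) ^ σ = a * (a + b) ^ (σ - 1) + b * (a + b) ^ (σ - 1) := by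
    rw [show σ = 1 + (σ - 1) by ring, Real.rpow_add hab, Real.rpow_one]; ring
  have h1 := key a ha (by linarith)
  have h2 := key b hb (by linarith)
  linarith

lemma sqrt_tri {a b : ℝ} (ha : 0 ≤ a) (hb : 0 ≤ b) :
    Real.sqrt (1 + (a + b) ^ 2) ≤ Real.sqrt (1 + a ^ 2) + Real.sqrt (1 + b ^ 2) := by
  have h1 : a * b + 1 ≤ Real.sqrt (1 + a ^ 2) * Real.sqrt (1 + b ^ 2) := by
    rw [← Real.sqrt_mul (by positivity)]
    have := Real.sqrt_le_sqrt (show (a * b + 1) ^ 2 ≤ (1 + a ^ 2) * (1 + b ^ 2) by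
      nlinarith [sq_nonneg (a - b)])
    rwa [Real.sqrt_sq (by positivity)] at this
  have hS : 0 ≤ Real.sqrt (1 + a ^ 2) + Real.sqrt (1 + b ^ 2) := by positivity
  calc Real.sqrt (1 + (a + b) ^ 2)
      ≤ Real.sqrt ((Real.sqrt (1 + a ^ 2) + Real.sqrt (1 + b ^ 2)) ^ 2) := by
        apply Real.sqrt_le_sqrt
        nlinarith [Real.sq_sqrt (show (0:ℝ) ≤ 1 + a ^ 2 by positivity),
          Real.sq_sqrt (show (0:ℝ) ≤ 1 + b ^ 2 by positivity)]
    _ = Real.sqrt (1 + a ^ 2) + Real.sqrt (1 + b ^ 2) := Real.sqrt_sq hS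

lemma jap_triangle {d : ℕ} (ξ η : E d) : jap ξ ≤ jap η + jap (ξ - η) := by
  have hnorm : ‖ξ‖ ≤ ‖η‖ + ‖ξ - η‖ := by
    calc ‖ξ‖ = ‖η + (ξ - η)‖ := by rw [add_sub_cancel]
      _ ≤ ‖η‖ + ‖ξ - η‖ := norm_add_le _ _
  calc jap ξ = Real.sqrt (1 + ‖ξ‖ ^ 2) := rfl
    _ ≤ Real.sqrt (1 + (‖η‖ + ‖ξ - η‖) ^ 2) := by
        apply Real.sqrt_le_sqrt
        nlinarith [norm_nonneg ξ]
    _ ≤ _ := sqrt_tri (norm_nonneg η) (norm_nonneg (ξ - η))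

/-- In the intermediate frequency region
`(1/K)|ξ−η| ≤ |η| ≤ K|ξ−η|`, there is `c' ∈ (0,1)` depending only on `K` and `σ`
with `⟨ξ⟩^σ ≤ ⟨η⟩^σ + c' ⟨ξ−η⟩^σ`. -/
theorem stmt_3 (σ K : ℝ) (hσ0 : 0 < σ) (hσ1 : σ < 1) (hK : 1 < K) :
    ∃ c' : ℝ, c' ∈ Set.Ioo (0 : ℝ) 1 ∧
      ∀ (d : ℕ) (ξ η : E d),
        (1 / K) * ‖ξ - η‖ ≤ ‖η‖ → ‖η‖ ≤ K * ‖ξ - η‖ →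
        jap ξ ^ σ ≤ jap η ^ σ + c' * jap (ξ - η) ^ σ := by
  have hK0 : (0:ℝ) < K := by linarith
  have hiK : (0:ℝ) < 1 / K := by positivity
  refine ⟨(1 / K + 1) ^ σ - (1 / K) ^ σ, ⟨?_, ?_⟩, ?_⟩
  · have := Real.rpow_lt_rpow hiK.le (show 1 / K < 1 / K + 1 by linarith) hσ0
    linarith
  · have := aux_strict_sub σ hσ0 hσ1 hiK one_pos
    rw [Real.one_rpow] at this
    linarith
  · intro d ξ η h1 h2
    set a := ‖η‖ with ha_def
    set b := ‖ξ - η‖ with hb_def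
    have ha0 : 0 ≤ a := norm_nonneg _
    have hb0 : 0 ≤ b := norm_nonneg _
    set u := jap η with hu_def
    set v := jap (ξ - η) with hv_def
    have hu1 : 1 ≤ u := jap_one_le η
    have hv1 : 1 ≤ v := jap_one_le (ξ - η)
    have hu0 : 0 < u := by linarith
    have hv0 : 0 < v := by linarith
    have hbKa : b ≤ K * a := by
      have := mul_le_mul_of_nonneg_left h1 hK0.le
      rw [← mul_assoc, mul_one_div, div_self hK0.ne', one_mul] at this
      exact this
    -- v ≤ K * u
    have hvKu : v ≤ K * u := by
      have h : 1 + b ^ 2 ≤ K ^ 2 * (1 + a ^ 2) := by nlinarith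
      calc v = Real.sqrt (1 + b ^ 2) := rfl
        _ ≤ Real.sqrt (K ^ 2 * (1 + a ^ 2)) := Real.sqrt_le_sqrt h
        _ = K * u := by
            rw [Real.sqrt_mul (by positivity), Real.sqrt_sq hK0.le, hu_def, jap]
    set t := u / v with ht_def
    have ht0 : 0 < t := by positivity
    have htK : 1 / K ≤ t := by
      rw [div_le_div_iff₀ hK0 hv0]
      linarith
    have hft : (t + 1) ^ σ - t ^ σ ≤ (1 / K + 1) ^ σ - (1 / K) ^ σ :=
      aux_anti σ hσ0 hσ1 (Set.mem_Ioi.mpr hiK) (Set.mem_Ioi.mpr ht0) htK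
    have hvt : v * t = u := by
      rw [ht_def, mul_div_cancel₀ _ hv0.ne']
    have huv : (u + v) ^ σ = v ^ σ * (t + 1) ^ σ := by
      rw [← Real.mul_rpow hv0.le (by positivity)]
      congr 1
      rw [mul_add, hvt, mul_one]
    have hut : u ^ σ = v ^ σ * t ^ σ := by
      rw [← Real.mul_rpow hv0.le ht0.le, hvt]
    have hcore : (u + v) ^ σ ≤ u ^ σ + ((1 / K + 1) ^ σ - (1 / K) ^ σ) * v ^ σ := by
      rw [huv, hut]
      have hv0σ : 0 ≤ v ^ σ := by positivity
      nlinarith [mul_le_mul_of_nonneg_left hft hv0σ]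
    have hξ : jap ξ ≤ u + v := jap_triangle ξ η
    have : jap ξ ^ σ ≤ (u + v) ^ σ :=
      Real.rpow_le_rpow (Real.sqrt_nonneg _) hξ hσ0.le
    linarith
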